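/- arXiv:2404.00602 — 3 statements merged into one kernel-verified Lean document; each statement's English description precedes it below -/
import Mathlib

section
/- Merkle collision extraction (Ext₁): for any function H : {0,1}* → {0,1}^λ, if tree is the Merkle tree built from M = (m_0,…,m_{2^k−1}) with root value root, and m'_i ≠ m_i is a message with a path path' of length k such that RootReconstruct^H(path', m'_i, i) = root, then H is not injective: there exist x ≠ x' with H(x) = H(x'). -/
/-- Root of the complete binary Merkle hash tree over the `2^k` messages
`M 0, …, M (2^k − 1)`: leaf `i` carries `H (M i)` and each internal node carries
the hash of the concatenation of its two children's values. -/
def merkleRoot (H : List Bool → List Bool) : ℕ → (ℕ → List Bool) → List Bool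
  | 0, M => H (M 0)
  | k + 1, M => H (merkleRoot H k M ++ merkleRoot H k (fun j => M (2 ^ k + j)))

/-- Authentication path for leaf index `i`: the list of sibling hash values along the
root-to-leaf path, from the top level down to the leaf level. -/
def merklePath (H : List Bool → List Bool) : ℕ → (ℕ → List Bool) → ℕ → List (List Bool)
  | 0, _, _ => []
  | k + 1, M, i =>
    if i < 2 ^ k then
      merkleRoot H k (fun j => M (2 ^ k + j)) :: merklePath H k M i
    else
      merkleRoot H k M :: merklePath H k (fun j => M (2 ^ k + j)) (i - 2 ^ k)

/-- `bitsOf k i` is the `k`-bit big-endian binary expansion `(b₁,…,b_k)` of `i`. -/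
def bitsOf : ℕ → ℕ → List Bool
  | 0, _ => []
  | k + 1, i => decide (2 ^ k ≤ i) :: bitsOf k (i % 2 ^ k)

/-- `rootReconstruct H bits path v` recomputes the root value from a claimed leaf
value `v`, the root-to-leaf direction bits, and the sibling path, by iterated
hashing: at each level the current value is concatenated with the sibling on the
side indicated by the direction bit. -/
def rootReconstruct (H : List Bool → List Bool) :
    List Bool → List (List Bool) → List Bool → List Bool
  | [], _, v => v
  | _ :: _, [], v => v
  | b :: bs, s :: ss, v =>
    let child := rootReconstruct H bs ss v
    H (if b then s ++ child else child ++ s)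

lemma merkleRoot_len (lam : ℕ) (H : List Bool → List Bool)
    (hH : ∀ x, (H x).length = lam) (k : ℕ) (M : ℕ → List Bool) :
    (merkleRoot H k M).length = lam := by
  cases k <;> simp [merkleRoot, hH]

lemma rootReconstruct_len (lam : ℕ) (H : List Bool → List Bool)
    (hH : ∀ x, (H x).length = lam) (bits : List Bool) (ss : List (List Bool))
    (m : List Bool) :
    (rootReconstruct H bits ss (H m)).length = lam := by
  cases bits <;> cases ss <;> simp [rootReconstruct, hH]

/-- Merkle collision extraction (Ext₁): for any `H : {0,1}* → {0,1}^λ`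
(all outputs have length `λ`), if the Merkle tree over `M = (m_0,…,m_{2^k−1})` has
root value `root`, and `m' ≠ m_i` is a message with a sibling path `path'` of
length `k` (consisting of `λ`-bit values) such that
`rootReconstruct H (bitsOf k i) path' (H m') = root`, then `H` is not injective:
there exist `x ≠ x'` with `H x = H x'`. -/
theorem stmt_5 (lam : ℕ) (H : List Bool → List Bool)
    (hH : ∀ x, (H x).length = lam)
    (k : ℕ) (M : ℕ → List Bool) (i : ℕ) (hi : i < 2 ^ k)
    (m' : List Bool) (hm' : m' ≠ M i)
    (path' : List (List Bool)) (hlen : path'.length = k)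
    (hpath : ∀ s ∈ path', s.length = lam)
    (hroot : rootReconstruct H (bitsOf k i) path' (H m') = merkleRoot H k M) :
    ∃ x x' : List Bool, x ≠ x' ∧ H x = H x' := by
  induction k generalizing M i path' with
  | zero =>
    interval_cases i
    simp only [bitsOf, rootReconstruct, merkleRoot] at hroot
    exact ⟨m', M 0, hm', hroot⟩
  | succ k ih =>
    obtain ⟨s, ss, rfl⟩ : ∃ s ss, path' = s :: ss := by
      cases path' with
      | nil => simp at hlen
      | cons a b => exact ⟨a, b, rfl⟩
    have hsslen : ss.length = k := by simpa using hlen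
    have hs : s.length = lam := hpath s (by simp)
    have hss : ∀ t ∈ ss, t.length = lam := fun t ht => hpath t (by simp [ht])
    by_cases hcase : i < 2 ^ k
    · have hbit : bitsOf (k+1) i = false :: bitsOf k i := by
        simp [bitsOf, Nat.mod_eq_of_lt hcase, Nat.not_le.mpr hcase]
      rw [hbit] at hroot
      simp only [rootReconstruct, Bool.false_eq_true, if_false] at hroot
      set child := rootReconstruct H (bitsOf k i) ss (H m') with hchild
      set L := merkleRoot H k M
      set R := merkleRoot H k (fun j => M (2 ^ k + j))
      by_cases heq : child ++ s = L ++ R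
      · have hclen : child.length = L.length := by
          rw [rootReconstruct_len lam H hH, merkleRoot_len lam H hH]
        obtain ⟨h1, h2⟩ := List.append_inj heq hclen
        exact ih M i hcase hm' ss hsslen hss h1
      · exact ⟨_, _, heq, by rw [hroot]; rfl⟩
    · push_neg at hcase
      have hlt : i - 2 ^ k < 2 ^ k := by
        have := hi; rw [pow_succ] at this; omega
      have hmod : i % 2 ^ k = i - 2 ^ k := by
        rw [Nat.mod_eq_sub_mod hcase, Nat.mod_eq_of_lt hlt]
      have hbit : bitsOf (k+1) i = true :: bitsOf k (i - 2 ^ k) := by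
        simp [bitsOf, hmod, hcase]
      rw [hbit] at hroot
      simp only [rootReconstruct, if_pos rfl, if_true] at hroot
      set child := rootReconstruct H (bitsOf k (i - 2 ^ k)) ss (H m') with hchild
      set L := merkleRoot H k M
      set R := merkleRoot H k (fun j => M (2 ^ k + j)) with hR
      by_cases heq : s ++ child = L ++ R
      · have hslen : s.length = L.length := by
          rw [hs, merkleRoot_len lam H hH]
        obtain ⟨h1, h2⟩ := List.append_inj heq hslen
        have hm'' : m' ≠ (fun j => M (2 ^ k + j)) (i - 2 ^ k) := by
          simpa [Nat.add_sub_cancel' hcase] using hm'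
        exact ih (fun j => M (2 ^ k + j)) (i - 2 ^ k) hlt hm'' ss hsslen hss h2
      · exact ⟨_, _, heq, by rw [hroot]; rfl⟩
end

section
/- Correctness of the oblivious signature construction OS_Ours: for any hash function H, commitment scheme COM, and correct digital signature scheme DS, and for any message list M = (m_0,…,m_{n−1}) of distinct messages with n = 2^k and any index j, the honestly produced signature σ^OS = (root, c, σ^DS, path, j, r) on m_j verifies, i.e., OS.Verify(vk, m_j, σ^OS) = 1. -/
lemma merkle_reconstruct (H : List Bool → List Bool) :
    ∀ (k : ℕ) (M : ℕ → List Bool) (j : ℕ), j < 2 ^ k →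
    rootReconstruct H (bitsOf k j) (merklePath H k M j) (H (M j)) = merkleRoot H k M := by
  intro k
  induction k with
  | zero =>
    intro M j hj
    interval_cases j
    simp [rootReconstruct, bitsOf, merklePath, merkleRoot]
  | succ k ih =>
    intro M j hj
    by_cases h : j < 2 ^ k
    · simp [bitsOf, merklePath, merkleRoot, rootReconstruct, h,
        Nat.not_le.mpr h, Nat.mod_eq_of_lt h, ih M j h]
    · push_neg at h
      have hpow : 2 ^ (k + 1) = 2 ^ k + 2 ^ k := by ring
      have h2 : j - 2 ^ k < 2 ^ k := by omega
      have hmod : j % 2 ^ k = j - 2 ^ k := by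
        have : j < 2 ^ k * 2 := by omega
        rw [Nat.mod_eq_sub_mod h, Nat.mod_eq_of_lt h2]
      have key := ih (fun t => M (2 ^ k + t)) (j - 2 ^ k) h2
      have hM : (2 ^ k + (j - 2 ^ k)) = j := by omega
      simp only [hM] at key
      simp [bitsOf, merklePath, merkleRoot, rootReconstruct, h, Nat.not_lt.mpr h,
        hmod, key]

/-- Correctness of the oblivious signature construction OS_Ours: for any hash
function `H`, commitment scheme (given by its `commit` algorithm), and correct
digital signature scheme `(sign, dsVerify)` for the key pair `(vk, sk)`, and for
any message list `M = (m_0,…,m_{n−1})` of distinct messages with `n = 2^k` and any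
index `j < 2^k`, the honestly produced signature
`σ^OS = (root, c, σ^DS, path, j, r)` on `m_j` verifies: all three checks of
`OS.Verify` succeed. -/
theorem stmt_8 {CK R C SK VK Sig : Type}
    (H : List Bool → List Bool)
    (commit : CK → List Bool → R → C)
    (sign : SK → (List Bool × C) → Sig)
    (dsVerify : VK → (List Bool × C) → Sig → Bool)
    (vk : VK) (sk : SK)
    (hDS : ∀ msg : List Bool × C, dsVerify vk msg (sign sk msg) = true)
    (k : ℕ) (M : ℕ → List Bool)
    (hdist : ∀ t t', t < 2 ^ k → t' < 2 ^ k → t ≠ t' → M t ≠ M t')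
    (j : ℕ) (hj : j < 2 ^ k) (ck : CK) (r : R) :
    let root := merkleRoot H k M
    let c := commit ck (M j) r
    let σDS := sign sk (root, c)
    let path := merklePath H k M j
    rootReconstruct H (bitsOf k j) path (H (M j)) = root ∧
    commit ck (M j) r = c ∧
    dsVerify vk (root, c) σDS = true := by
  refine ⟨merkle_reconstruct H k M j hj, rfl, hDS _⟩
end

section
/- Communication size asymptotics: in OS_Ours with n = 2^k messages, the total of the second-round message size plus the final signature size is |σ^DS| + (|σ^DS| + |c| + |r| + (k+1)λ + k) bits, which is O(log n) in n, whereas in OS_ZLH it is n·|σ^DS| + (|σ^DS| + |c| + |r|), which is Θ(n). -/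
open Filter Asymptotics

/-- Total of second-round message size plus final signature size in OS_Ours with
`n` messages, where `k = ⌈log₂ n⌉`: the signer sends one DS signature, and the
final signature is `(root, c, σ^DS, path, j, r)` with a Merkle path of `k` hash
values of `λ` bits each plus a `k`-bit index. -/
def oursTotal (sDS c r lam : ℕ) (n : ℕ) : ℕ :=
  sDS + (sDS + c + r + (Nat.clog 2 n + 1) * lam + Nat.clog 2 n)

/-- Total of second-round message size plus final signature size in OS_ZLH with
`n` messages: the signer sends `n` DS signatures and the final signature is
`(c, r, σ^DS)`. -/
def zlhTotal (sDS c r : ℕ) (n : ℕ) : ℕ :=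
  n * sDS + (sDS + c + r)

lemma clog_le_real (n : ℕ) (hn : 2 ≤ n) :
    (Nat.clog 2 n : ℝ) ≤ 2 * Real.logb 2 n := by
  have h1 : Nat.clog 2 n ≤ Nat.log 2 n + 1 := by
    rw [Nat.clog_le_iff_le_pow one_lt_two]
    exact (Nat.lt_pow_succ_log_self one_lt_two n).le
  have h2 : (Nat.log 2 n : ℝ) ≤ Real.logb 2 n := Real.natLog_le_logb n 2
  have h3 : (1 : ℝ) ≤ Real.logb 2 n := by
    rw [show (1:ℝ) = Real.logb 2 2 by simp]
    exact Real.logb_le_logb_of_le one_lt_two (by norm_num) (by exact_mod_cast hn)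
  calc (Nat.clog 2 n : ℝ) ≤ (Nat.log 2 n : ℝ) + 1 := by exact_mod_cast h1
    _ ≤ Real.logb 2 n + Real.logb 2 n := add_le_add h2 h3
    _ = 2 * Real.logb 2 n := by ring


/-- Communication size asymptotics: in OS_Ours with `n = 2^k` messages, the total
of the second-round message size plus the final signature size is
`|σ^DS| + (|σ^DS| + |c| + |r| + (k+1)λ + k)` bits, which is `O(log n)` in `n`,
whereas in OS_ZLH it is `n·|σ^DS| + (|σ^DS| + |c| + |r|)`, which is `Θ(n)`. -/
theorem stmt_13 (sDS c r lam : ℕ) (hs : 0 < sDS) (hl : 0 < lam) :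
    (∀ k : ℕ, 0 < k → oursTotal sDS c r lam (2 ^ k) =
      sDS + (sDS + c + r + (k + 1) * lam + k)) ∧
    ((fun n : ℕ => (oursTotal sDS c r lam n : ℝ)) =O[atTop]
      fun n : ℕ => Real.log n) ∧
    ((fun n : ℕ => (zlhTotal sDS c r n : ℝ)) =Θ[atTop] fun n : ℕ => (n : ℝ)) := by
  
  refine ⟨fun k _ => by simp [oursTotal, Nat.clog_pow 2 k one_lt_two], ?_, ?_⟩
  · rw [isBigO_iff]
    refine ⟨(2 * sDS + c + r + lam + ((lam + 1) * 2)) * (2 / Real.log 2), ?_⟩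
    filter_upwards [eventually_ge_atTop 2] with n hn
    have hlog2 : (0:ℝ) < Real.log 2 := Real.log_pos one_lt_two
    have hlogn : (1:ℝ) ≤ Real.logb 2 n := by
      rw [show (1:ℝ) = Real.logb 2 2 by simp]
      exact Real.logb_le_logb_of_le one_lt_two (by norm_num) (by exact_mod_cast hn)
    have hc := clog_le_real n hn
    rw [Real.norm_eq_abs, Real.norm_eq_abs, abs_of_nonneg (by positivity),
      abs_of_nonneg (Real.log_nonneg (by exact_mod_cast hn.trans' one_le_two))]
    have hlb : Real.logb 2 n = Real.log n / Real.log 2 := rfl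
    have key : (oursTotal sDS c r lam n : ℝ)
        ≤ (2 * sDS + c + r + lam + ((lam + 1) * 2)) * Real.logb 2 n := by
      have : (oursTotal sDS c r lam n : ℝ)
          = (2 * sDS + c + r + lam) + ((lam : ℝ) + 1) * (Nat.clog 2 n : ℝ) := by
        push_cast [oursTotal]; ring
      rw [this]
      have h1 : ((2 * sDS + c + r + lam : ℕ) : ℝ) ≤ (2 * sDS + c + r + lam : ℕ) * Real.logb 2 n :=
        le_mul_of_one_le_right (by positivity) hlogn
      have h2 : ((lam : ℝ) + 1) * (Nat.clog 2 n : ℝ) ≤ ((lam : ℝ) + 1) * (2 * Real.logb 2 n) :=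
        mul_le_mul_of_nonneg_left hc (by positivity)
      push_cast at h1 ⊢
      nlinarith
    calc (oursTotal sDS c r lam n : ℝ)
        ≤ (2 * sDS + c + r + lam + ((lam + 1) * 2)) * Real.logb 2 n := key
      _ = (2 * sDS + c + r + lam + ((lam + 1) * 2)) * (2 / Real.log 2) / 2 * Real.log n := by
          rw [hlb]; field_simp
      _ ≤ (2 * sDS + c + r + lam + ((lam + 1) * 2)) * (2 / Real.log 2) * Real.log n := by
          have hln : (0:ℝ) ≤ Real.log n := Real.log_nonneg (by exact_mod_cast hn.trans' one_le_two)
          have : (0:ℝ) ≤ (2 * sDS + c + r + lam + ((lam + 1) * 2)) * (2 / Real.log 2) := by positivity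
          nlinarith
  · constructor
    · rw [isBigO_iff]
      refine ⟨sDS + (sDS + c + r), ?_⟩
      filter_upwards [eventually_ge_atTop 1] with n hn
      rw [Real.norm_eq_abs, Real.norm_eq_abs, abs_of_nonneg (by positivity),
        abs_of_nonneg (by positivity)]
      have : (zlhTotal sDS c r n : ℝ) = n * sDS + (sDS + c + r) := by
        simp [zlhTotal]
      rw [this]
      have hn' : (1:ℝ) ≤ n := by exact_mod_cast hn
      nlinarith
    · rw [isBigO_iff]
      refine ⟨1, ?_⟩
      filter_upwards [eventually_ge_atTop 1] with n hn
      rw [Real.norm_eq_abs, Real.norm_eq_abs, abs_of_nonneg (by positivity),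
        abs_of_nonneg (by positivity), one_mul]
      have : (n : ℝ) ≤ n * sDS := le_mul_of_one_le_right (by positivity) (by exact_mod_cast hs)
      simp only [zlhTotal]; push_cast; linarith
end
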